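/- Let n ≥ 1, let Q be a symmetric n×n real matrix with det Q ≠ 0, and let G be the (n+2)×(n+2) real matrix with entries G_{0,n+1} = G_{n+1,0} = 1, G_{a,a} = 1 for 1 ≤ a ≤ n, and all other entries zero. Define the quadrilinear form R_Q on ℝ^{n+2} by R_Q(x,y,z,w) = Σ_{a,b=1}^{n} (x_a y_{n+1} − x_{n+1} y_a) Q_{ab} (z_b w_{n+1} − z_{n+1} w_b). Suppose M is an (n+2)×(n+2) real matrix satisfying Mᵀ·G·M = G, R_Q(Mx, My, Mz, Mw) = R_Q(x, y, z, w) for all x, y, z, w ∈ ℝ^{n+2}, and M·e_0 = λ·e_0 for some real λ. Then λ = 1 or λ = −1. -/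

import Mathlib

open Matrix

/-- The Gram matrix of the Lorentzian metric of a Cahen–Wallach space in the
quasi-orthonormal basis `e_- = e_0, e_1, …, e_n, e_+ = e_{n+1}`:
`G_{0,n+1} = G_{n+1,0} = 1`, `G_{a,a} = 1` for `1 ≤ a ≤ n`, all other entries zero. -/
def cwGram (n : ℕ) : Matrix (Fin (n + 2)) (Fin (n + 2)) ℝ :=
  Matrix.of fun i j =>
    if (i = 0 ∧ j = Fin.last (n + 1)) ∨ (i = Fin.last (n + 1) ∧ j = 0) then 1
    else if i = j ∧ 1 ≤ (i : ℕ) ∧ (i : ℕ) ≤ n then 1 else 0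

/-- The curvature tensor of a Cahen–Wallach space at a point, as a quadrilinear form on
`ℝ^(n+2)`:
`R_Q(x,y,z,w) = ∑_{a,b=1}^{n} (x_a y_{n+1} − x_{n+1} y_a) Q_{ab} (z_b w_{n+1} − z_{n+1} w_b)`. -/
def cahenWallachR (n : ℕ) (Q : Matrix (Fin n) (Fin n) ℝ)
    (x y z w : Fin (n + 2) → ℝ) : ℝ :=
  ∑ a : Fin n, ∑ b : Fin n,
    (x a.succ.castSucc * y (Fin.last (n + 1)) - x (Fin.last (n + 1)) * y a.succ.castSucc)
      * Q a b *
    (z b.succ.castSucc * w (Fin.last (n + 1)) - z (Fin.last (n + 1)) * w b.succ.castSucc)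

namespace CWaux

variable {n : ℕ}

lemma mid_ne_zero (a : Fin n) : (a.succ.castSucc : Fin (n+2)) ≠ 0 := by
  simp [Fin.ext_iff]

lemma mid_ne_last (a : Fin n) : (a.succ.castSucc : Fin (n+2)) ≠ Fin.last (n+1) := by
  simp [Fin.ext_iff]; omega

lemma last_ne_zero : (Fin.last (n+1) : Fin (n+2)) ≠ 0 := by
  simp [Fin.ext_iff]

lemma cw00 : cwGram n 0 0 = 0 := by
  simp [cwGram, Fin.ext_iff, -Fin.val_eq_zero_iff]

lemma cw0l : cwGram n 0 (Fin.last (n+1)) = 1 := by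
  simp [cwGram]

lemma cwl0 : cwGram n (Fin.last (n+1)) 0 = 1 := by
  simp [cwGram, Fin.ext_iff, -Fin.val_eq_zero_iff]

lemma cwll : cwGram n (Fin.last (n+1)) (Fin.last (n+1)) = 0 := by
  simp [cwGram, Fin.ext_iff, -Fin.val_eq_zero_iff]

lemma cw0m (a : Fin n) : cwGram n 0 a.succ.castSucc = 0 := by
  simp [cwGram, Fin.ext_iff, -Fin.val_eq_zero_iff]; omega

lemma cwm0 (a : Fin n) : cwGram n a.succ.castSucc 0 = 0 := by
  simp [cwGram, Fin.ext_iff, -Fin.val_eq_zero_iff]; omega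

lemma cwml (a : Fin n) : cwGram n a.succ.castSucc (Fin.last (n+1)) = 0 := by
  have := a.isLt
  simp [cwGram, Fin.ext_iff, -Fin.val_eq_zero_iff]
  omega

lemma cwlm (a : Fin n) : cwGram n (Fin.last (n+1)) a.succ.castSucc = 0 := by
  simp [cwGram, Fin.ext_iff, -Fin.val_eq_zero_iff]

lemma cwmm (a b : Fin n) : cwGram n a.succ.castSucc b.succ.castSucc
    = if a = b then 1 else 0 := by
  have := a.isLt
  simp only [cwGram, of_apply, Fin.ext_iff, Fin.coe_castSucc, Fin.val_succ, Fin.val_last,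
    Fin.val_zero]
  have hb := b.isLt
  rcases eq_or_ne a b with h|h
  · subst h; rw [if_pos rfl, if_neg (by omega), if_pos (by omega)]
  · have h' : (a:ℕ) ≠ (b:ℕ) := fun hc => h (Fin.ext hc)
    rw [if_neg h', if_neg (by omega), if_neg (by omega)]

lemma sum_split (f : Fin (n+2) → ℝ) :
    ∑ i, f i = f 0 + (∑ a : Fin n, f a.succ.castSucc) + f (Fin.last (n+1)) := by
  rw [Fin.sum_univ_succ, Fin.sum_univ_castSucc]
  simp [Fin.succ_castSucc, Fin.succ_last, add_assoc, -Fin.castSucc_succ]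

lemma gram_bilin (u v : Fin (n+2) → ℝ) :
    ∑ k, ∑ l, u k * cwGram n k l * v l
      = u 0 * v (Fin.last (n+1)) + u (Fin.last (n+1)) * v 0
        + ∑ a : Fin n, u a.succ.castSucc * v a.succ.castSucc := by
  have h0 : ∑ l, u 0 * cwGram n 0 l * v l = u 0 * v (Fin.last (n+1)) := by
    rw [sum_split]; simp [cw00, cw0m, cw0l, -Fin.castSucc_succ]
  have hl : ∑ l, u (Fin.last (n+1)) * cwGram n (Fin.last (n+1)) l * v l
      = u (Fin.last (n+1)) * v 0 := by
    rw [sum_split]; simp [cwl0, cwlm, cwll, -Fin.castSucc_succ]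
  have hm : ∀ a : Fin n, ∑ l, u a.succ.castSucc * cwGram n a.succ.castSucc l * v l
      = u a.succ.castSucc * v a.succ.castSucc := by
    intro a
    rw [sum_split]
    simp [cwm0, cwml, cwmm, mul_ite, ite_mul, Finset.sum_ite_eq, -Fin.castSucc_succ]
  rw [sum_split (f := fun k => ∑ l, u k * cwGram n k l * v l), h0, hl]
  simp only [hm]
  ring

end CWaux

open CWaux
/-- If `M` preserves the Cahen–Wallach metric (`Mᵀ G M = G`) and curvature tensor `R_Q`
(with `Q` symmetric and invertible), and `M e_0 = lam • e_0`, then `lam = 1` or `lam = -1`. -/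
theorem stmt_6 (n : ℕ) (hn : 1 ≤ n) (Q : Matrix (Fin n) (Fin n) ℝ)
    (hQsymm : Q.IsSymm) (hQdet : Q.det ≠ 0)
    (M : Matrix (Fin (n + 2)) (Fin (n + 2)) ℝ)
    (hMG : Mᵀ * cwGram n * M = cwGram n)
    (hMR : ∀ x y z w : Fin (n + 2) → ℝ,
      cahenWallachR n Q (M.mulVec x) (M.mulVec y) (M.mulVec z) (M.mulVec w)
        = cahenWallachR n Q x y z w)
    (lam : ℝ)
    (hM0 : M.mulVec (Pi.single (0 : Fin (n + 2)) 1)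
        = lam • (Pi.single (0 : Fin (n + 2)) 1 : Fin (n + 2) → ℝ)) :
    lam = 1 ∨ lam = -1 := by
  classical
  have hcol : ∀ j : Fin (n+2), M.mulVec (Pi.single j 1) = fun i => M i j := by
    intro j; ext i; simp [Matrix.mulVec_single]
  -- column 0 of M
  have hM00 : ∀ i, M i 0 = lam * (Pi.single (0 : Fin (n+2)) 1 : Fin (n+2) → ℝ) i := by
    intro i
    have := congrFun hM0 i
    rw [hcol 0] at this
    simpa using this
  have hMm0 : ∀ a : Fin n, M a.succ.castSucc 0 = 0 := by
    intro a; rw [hM00]; simp [Pi.single_apply, mid_ne_zero a]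
  have hMl0 : M (Fin.last (n+1)) 0 = 0 := by
    rw [hM00]; simp [Pi.single_apply, last_ne_zero]
  have hM000 : M 0 0 = lam := by
    rw [hM00]; simp
  -- bilinear form of columns
  have hB : ∀ i j : Fin (n+2),
      M 0 i * M (Fin.last (n+1)) j + M (Fin.last (n+1)) i * M 0 j
        + ∑ a : Fin n, M a.succ.castSucc i * M a.succ.castSucc j = cwGram n i j := by
    intro i j
    have e : (Mᵀ * cwGram n * M) i j = ∑ k, ∑ l, M k i * cwGram n k l * M l j := by
      rw [Matrix.mul_apply]
      simp only [Matrix.mul_apply, transpose_apply, Finset.sum_mul]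
      rw [Finset.sum_comm]
    rw [← gram_bilin (u := fun k => M k i) (v := fun l => M l j), ← e, hMG]
  set μ := M (Fin.last (n+1)) (Fin.last (n+1)) with hμ
  have key1 : lam * μ = 1 := by
    have := hB 0 (Fin.last (n+1))
    rw [cw0l] at this
    simp only [hM000, hMl0, hMm0] at this
    simpa using this
  have hlam0 : lam ≠ 0 := by
    intro h; rw [h, zero_mul] at key1; exact zero_ne_one key1
  have key2 : ∀ a : Fin n, M (Fin.last (n+1)) a.succ.castSucc = 0 := by
    intro a
    have := hB 0 a.succ.castSucc
    rw [cw0m] at this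
    simp only [hM000, hMl0, hMm0] at this
    simp only [zero_mul, mul_zero, Finset.sum_const_zero, add_zero, zero_add] at this
    exact (mul_eq_zero.mp this).resolve_left hlam0
  set A : Matrix (Fin n) (Fin n) ℝ :=
    Matrix.of fun c a => M c.succ.castSucc a.succ.castSucc with hA
  have hATA : Aᵀ * A = 1 := by
    ext a b
    have := hB a.succ.castSucc b.succ.castSucc
    rw [cwmm, key2 a, key2 b] at this
    simp only [mul_zero, zero_mul, zero_add, add_zero] at this
    rw [Matrix.mul_apply]
    simpa [hA, Matrix.one_apply] using this
  -- curvature invariance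
  have hRHS : ∀ a b : Fin n,
      cahenWallachR n Q (Pi.single a.succ.castSucc 1) (Pi.single (Fin.last (n+1)) 1)
        (Pi.single b.succ.castSucc 1) (Pi.single (Fin.last (n+1)) 1) = Q a b := by
    intro a b
    have inj : ∀ c e : Fin n, ((c.succ.castSucc : Fin (n+2)) = e.succ.castSucc) ↔ c = e := by
      intro c e; rw [Fin.castSucc_inj, Fin.succ_inj]
    have hne : ∀ c : Fin n, (Fin.last (n+1) : Fin (n+2)) ≠ c.succ.castSucc :=
      fun c => (mid_ne_last c).symm
    unfold cahenWallachR
    simp [Pi.single_apply, inj, mid_ne_last, hne, Finset.sum_ite_eq, Finset.sum_ite_eq',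
      mul_ite, ite_mul]
  have hcur : ∀ a b : Fin n,
      ∑ c : Fin n, ∑ d : Fin n, A c a * Q c d * A d b = lam ^ 2 * Q a b := by
    intro a b
    have hR := hMR (Pi.single a.succ.castSucc 1) (Pi.single (Fin.last (n+1)) 1)
      (Pi.single b.succ.castSucc 1) (Pi.single (Fin.last (n+1)) 1)
    rw [hcol, hcol, hcol, hRHS] at hR
    unfold cahenWallachR at hR
    simp only [key2, zero_mul, mul_zero, sub_zero] at hR
    rw [← hR]
    rw [Finset.mul_sum]
    apply Finset.sum_congr rfl; intro c _
    rw [Finset.mul_sum]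
    apply Finset.sum_congr rfl; intro d _
    show A c a * Q c d * A d b = lam ^ 2 * (A c a * μ * Q c d * (A d b * μ))
    linear_combination (-(A c a * Q c d * A d b)) * (lam * μ + 1) * key1
  have h2 : Aᵀ * Q * A = (lam ^ 2) • Q := by
    ext a b
    rw [Matrix.mul_apply]
    simp only [Matrix.mul_apply, transpose_apply, Finset.sum_mul, Matrix.smul_apply, smul_eq_mul]
    rw [Finset.sum_comm]
    exact hcur a b
  -- determinants
  have hdetA : A.det * A.det = 1 := by
    have := congrArg Matrix.det hATA
    rwa [Matrix.det_mul, Matrix.det_transpose, Matrix.det_one] at this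
  have hdet2 : A.det * Q.det * A.det = (lam ^ 2) ^ n * Q.det := by
    have := congrArg Matrix.det h2
    rwa [Matrix.det_mul, Matrix.det_mul, Matrix.det_transpose, Matrix.det_smul,
      Fintype.card_fin] at this
  have hpow : (lam ^ 2) ^ n = 1 := by
    have h : (lam ^ 2) ^ n * Q.det = 1 * Q.det := by
      rw [← hdet2]; linear_combination Q.det * hdetA
    exact mul_right_cancel₀ hQdet h
  have hsq : lam ^ 2 = 1 := by
    rcases lt_trichotomy (lam ^ 2) 1 with h|h|h
    · exfalso
      have := pow_lt_one₀ (sq_nonneg lam) h (by omega : n ≠ 0)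
      rw [hpow] at this; exact lt_irrefl 1 this
    · exact h
    · exfalso
      have := one_lt_pow₀ h (by omega : n ≠ 0)
      rw [hpow] at this; exact lt_irrefl 1 this
  have : lam * lam = 1 := by nlinarith [hsq]
  exact mul_self_eq_one_iff.mp this
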